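/- Let C be an abelian category and 𝒲 a class of objects of C. Let 0→A→x B→y C→0 be a Hom(𝒲,−)-exact short exact sequence, and let 0→K₁ᴬ→W₀ᴬ→A→0 and 0→K₁ᶜ→W₀ᶜ→C→0 be short exact sequences with W₀ᶜ ∈ 𝒲. Then there exist an object K₁ᴮ and morphisms forming a commutative 3×3 diagram in which: the three columns are short exact sequences 0→K₁ᴬ→W₀ᴬ→A→0 (the given one), 0→K₁ᴮ→W₀ᴬ⊕W₀ᶜ→B→0, and 0→K₁ᶜ→W₀ᶜ→C→0 (the given one); the middle row is the split short exact sequence 0→W₀ᴬ→W₀ᴬ⊕W₀ᶜ→W₀ᶜ→0 given by the canonical injection and projection; the bottom row is the given sequence 0→A→B→C→0; and the top row 0→K₁ᴬ→K₁ᴮ→K₁ᶜ→0 is a short exact sequence. Moreover: (1) if the first and third columns are Hom(𝒲,−)-exact, then all rows and columns of this diagram are Hom(𝒲,−)-exact; (2) if the bottom row and the first and third columns are Hom(−,𝒲)-exact, then all rows and columns of this diagram are Hom(−,𝒲)-exact. -/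
import Mathlib


open CategoryTheory Category Limits ZeroObject

universe v u

variable {C : Type u} [Category.{v} C] [Abelian C]

def SES {A B X : C} (f : A ⟶ B) (g : B ⟶ X) : Prop :=
  ∃ w : f ≫ g = 0, (CategoryTheory.ShortComplex.mk f g w).ShortExact

def CovExact (𝒲 : Set C) {A B X : C} (f : A ⟶ B) (g : B ⟶ X) : Prop :=
  ∀ W ∈ 𝒲,
    (Function.Injective fun u : W ⟶ A => u ≫ f) ∧
    (∀ v : W ⟶ B, v ≫ g = 0 → ∃ u : W ⟶ A, u ≫ f = v) ∧
    (Function.Surjective fun v : W ⟶ B => v ≫ g)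

def ContraExact (𝒲 : Set C) {A B X : C} (f : A ⟶ B) (g : B ⟶ X) : Prop :=
  ∀ W ∈ 𝒲,
    (Function.Injective fun u : X ⟶ W => g ≫ u) ∧
    (∀ v : B ⟶ W, f ≫ v = 0 → ∃ u : X ⟶ W, g ≫ u = v) ∧
    (Function.Surjective fun v : B ⟶ W => f ≫ v)

lemma covExact_of_ses (𝒲 : Set C) {A B X : C} {f : A ⟶ B} {g : B ⟶ X}
    (h : SES f g) (hs : ∀ W ∈ 𝒲, Function.Surjective fun v : W ⟶ B => v ≫ g) :
    CovExact 𝒲 f g := by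
  obtain ⟨w, hse⟩ := h
  haveI := hse.mono_f
  intro W hW
  refine ⟨fun u u' huu => ?_, fun v hv => ?_, hs W hW⟩
  · exact (cancel_mono f).1 huu
  · obtain ⟨l, hl⟩ := KernelFork.IsLimit.lift' hse.exact.fIsKernel v hv
    exact ⟨l, hl⟩

lemma contraExact_of_ses (𝒲 : Set C) {A B X : C} {f : A ⟶ B} {g : B ⟶ X}
    (h : SES f g) (hs : ∀ W ∈ 𝒲, Function.Surjective fun v : B ⟶ W => f ≫ v) :
    ContraExact 𝒲 f g := by
  obtain ⟨w, hse⟩ := h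
  haveI := hse.epi_g
  intro W hW
  refine ⟨fun u u' huu => ?_, fun v hv => ?_, hs W hW⟩
  · exact (cancel_epi g).1 huu
  · obtain ⟨l, hl⟩ := CokernelCofork.IsColimit.desc' hse.exact.gIsCokernel v hv
    exact ⟨l, hl⟩

/-- Horseshoe-type 3×3 diagram built from a `Hom(𝒲,-)`-exact sequence
`0→A→B→C→0` and short exact sequences `0→K₁ᴬ→W₀ᴬ→A→0`, `0→K₁ᶜ→W₀ᶜ→C→0` with
`W₀ᶜ ∈ 𝒲`, together with the two "moreover" exactness transfers. -/
theorem stmt_6 (𝒲 : Set C) {A B X K1A W0A K1C W0C : C}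
    (x : A ⟶ B) (y : B ⟶ X)
    (gA : K1A ⟶ W0A) (fA : W0A ⟶ A)
    (gC : K1C ⟶ W0C) (fC : W0C ⟶ X)
    (hrow : SES x y) (hcov : CovExact 𝒲 x y)
    (hA : SES gA fA) (hC : SES gC fC)
    (hWC : W0C ∈ 𝒲) :
    ∃ (K1B : C) (gB : K1B ⟶ W0A ⊞ W0C) (fB : W0A ⊞ W0C ⟶ B)
      (x1 : K1A ⟶ K1B) (y1 : K1B ⟶ K1C),
      -- commutativity of the four squares
      x1 ≫ gB = gA ≫ biprod.inl ∧
      gB ≫ biprod.snd = y1 ≫ gC ∧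
      biprod.inl ≫ fB = fA ≫ x ∧
      fB ≫ y = biprod.snd ≫ fC ∧
      -- the top row, the middle (split) row and the middle column are short exact
      SES x1 y1 ∧
      SES (biprod.inl : W0A ⟶ W0A ⊞ W0C) (biprod.snd : W0A ⊞ W0C ⟶ W0C) ∧
      SES gB fB ∧
      -- (1) if the first and third columns are Hom(𝒲,-)-exact, then so are all rows and columns
      (CovExact 𝒲 gA fA → CovExact 𝒲 gC fC →
        (CovExact 𝒲 x1 y1 ∧
         CovExact 𝒲 (biprod.inl : W0A ⟶ W0A ⊞ W0C) (biprod.snd : W0A ⊞ W0C ⟶ W0C) ∧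
         CovExact 𝒲 x y ∧
         CovExact 𝒲 gA fA ∧ CovExact 𝒲 gB fB ∧ CovExact 𝒲 gC fC)) ∧
      -- (2) if the bottom row and the first and third columns are Hom(-,𝒲)-exact,
      -- then so are all rows and columns
      (ContraExact 𝒲 x y → ContraExact 𝒲 gA fA → ContraExact 𝒲 gC fC →
        (ContraExact 𝒲 x1 y1 ∧
         ContraExact 𝒲 (biprod.inl : W0A ⟶ W0A ⊞ W0C) (biprod.snd : W0A ⊞ W0C ⟶ W0C) ∧
         ContraExact 𝒲 x y ∧
         ContraExact 𝒲 gA fA ∧ ContraExact 𝒲 gB fB ∧ ContraExact 𝒲 gC fC)) := by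
  obtain ⟨wxy, hxy⟩ := hrow
  obtain ⟨wA, hAse⟩ := hA
  obtain ⟨wC, hCse⟩ := hC
  haveI := hxy.mono_f
  haveI := hxy.epi_g
  haveI := hAse.mono_f
  haveI := hAse.epi_g
  haveI := hCse.mono_f
  haveI := hCse.epi_g
  -- lift `fC` along `y` using `Hom(W₀ᶜ,-)`-exactness
  obtain ⟨t, ht⟩ := (hcov W0C hWC).2.2 fC
  have ht : t ≫ y = fC := ht
  -- the middle column
  let fB : W0A ⊞ W0C ⟶ B := biprod.desc (fA ≫ x) t
  have hfB : fB = biprod.desc (fA ≫ x) t := rfl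
  have hinlfB : biprod.inl ≫ fB = fA ≫ x := biprod.inl_desc _ _
  have hinrfB : biprod.inr ≫ fB = t := biprod.inr_desc _ _
  have hfBy : fB ≫ y = biprod.snd ≫ fC := by
    apply biprod.hom_ext'
    · rw [← assoc, hinlfB, assoc, wxy, comp_zero, ← assoc, biprod.inl_snd, zero_comp]
    · rw [← assoc, hinrfB, ht, ← assoc, biprod.inr_snd, id_comp]
  haveI hepifB : Epi fB := by
    rw [Preadditive.epi_iff_cancel_zero]
    intro Z k hk
    have h1 : fA ≫ x ≫ k = 0 := by
      rw [← assoc, ← hinlfB, assoc, hk, comp_zero]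
    have hxk : x ≫ k = 0 := by
      rw [← cancel_epi fA, h1, comp_zero]
    obtain ⟨m, hm⟩ := CokernelCofork.IsColimit.desc' hxy.exact.gIsCokernel k hxk
    have hm : y ≫ m = k := hm
    have h2 : fC ≫ m = 0 := by
      rw [← ht, assoc, hm, ← hinrfB, assoc, hk, comp_zero]
    have hm0 : m = 0 := by rw [← cancel_epi fC, h2, comp_zero]
    rw [← hm, hm0, comp_zero]
  let K1B := kernel fB
  let gB : K1B ⟶ W0A ⊞ W0C := kernel.ι fB
  have hgB : gB = kernel.ι fB := rfl
  have wB : gB ≫ fB = 0 := kernel.condition fB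
  have hx1w : (gA ≫ biprod.inl) ≫ fB = 0 := by
    rw [assoc, hinlfB, ← assoc, wA, zero_comp]
  let x1 : K1A ⟶ K1B := kernel.lift fB (gA ≫ biprod.inl) hx1w
  have hx1 : x1 ≫ gB = gA ≫ biprod.inl := kernel.lift_ι _ _ _
  have hy1w : (gB ≫ biprod.snd) ≫ fC = 0 := by
    rw [assoc, ← hfBy, ← assoc, wB, zero_comp]
  obtain ⟨y1, hy1⟩ := KernelFork.IsLimit.lift' hCse.exact.fIsKernel (gB ≫ biprod.snd) hy1w
  have hy1 : y1 ≫ gC = gB ≫ biprod.snd := hy1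
  have w01 : x1 ≫ y1 = 0 := by
    rw [← cancel_mono gC, assoc, hy1, ← assoc, hx1, assoc, biprod.inl_snd, comp_zero,
      zero_comp]
  -- splitting of the middle row
  have spl : (ShortComplex.mk (biprod.inl : W0A ⟶ W0A ⊞ W0C) (biprod.snd : W0A ⊞ W0C ⟶ W0C)
      biprod.inl_snd).Splitting :=
    { r := biprod.fst
      s := biprod.inr
      f_r := biprod.inl_fst
      s_g := biprod.inr_snd
      id := biprod.total }
  -- the snake input
  let D : ShortComplex.SnakeInput C :=
    { L₀ := ShortComplex.mk x1 y1 w01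
      L₁ := ShortComplex.mk (biprod.inl : W0A ⟶ W0A ⊞ W0C) (biprod.snd : W0A ⊞ W0C ⟶ W0C)
        biprod.inl_snd
      L₂ := ShortComplex.mk x y wxy
      L₃ := ShortComplex.mk (0 : (0 : C) ⟶ (0 : C)) (0 : (0 : C) ⟶ (0 : C)) (by simp)
      v₀₁ := { τ₁ := gA, τ₂ := gB, τ₃ := gC, comm₁₂ := hx1.symm, comm₂₃ := hy1.symm }
      v₁₂ := { τ₁ := fA, τ₂ := fB, τ₃ := fC, comm₁₂ := hinlfB.symm, comm₂₃ := hfBy }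
      v₂₃ := 0
      w₀₂ := by ext <;> simp [wA, wB, wC]
      w₁₃ := comp_zero
      h₀ := by
        apply ShortComplex.isLimitOfIsLimitπ
        · exact (KernelFork.isLimitMapConeEquiv _ _).symm hAse.exact.fIsKernel
        · exact (KernelFork.isLimitMapConeEquiv _ _).symm (kernelIsKernel fB)
        · exact (KernelFork.isLimitMapConeEquiv _ _).symm hCse.exact.fIsKernel
      h₃ := by
        apply ShortComplex.isColimitOfIsColimitπ
        · exact (CokernelCofork.isColimitMapCoconeEquiv _ _).symm
            (CokernelCofork.IsColimit.ofEpiOfIsZero _ (by exact hAse.epi_g) (isZero_zero C))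
        · exact (CokernelCofork.isColimitMapCoconeEquiv _ _).symm
            (CokernelCofork.IsColimit.ofEpiOfIsZero _ (by exact hepifB) (isZero_zero C))
        · exact (CokernelCofork.isColimitMapCoconeEquiv _ _).symm
            (CokernelCofork.IsColimit.ofEpiOfIsZero _ (by exact hCse.epi_g) (isZero_zero C))
      L₁_exact := spl.shortExact.exact
      epi_L₁_g := by dsimp; infer_instance
      L₂_exact := hxy.exact
      mono_L₂_f := hxy.mono_f }
  have topExact : (ShortComplex.mk x1 y1 w01).Exact := D.L₀_exact
  haveI hmonox1 : Mono x1 := by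
    have h1 : Mono (x1 ≫ gB) := by rw [hx1]; infer_instance
    exact mono_of_mono x1 gB
  haveI hepiy1 : Epi y1 := by
    have hδ : D.L₁'.g = 0 := (isZero_zero C).eq_of_tgt _ _
    exact (ShortComplex.exact_iff_epi D.L₁' hδ).1 D.L₁'_exact
  have topSE : SES x1 y1 := ⟨w01, { exact := topExact }⟩
  have midSE : SES (biprod.inl : W0A ⟶ W0A ⊞ W0C) (biprod.snd : W0A ⊞ W0C ⟶ W0C) :=
    ⟨biprod.inl_snd, spl.shortExact⟩
  have colSE : SES gB fB :=
    ⟨wB, { exact := ShortComplex.exact_of_f_is_kernel _ (kernelIsKernel fB) }⟩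
  refine ⟨K1B, gB, fB, x1, y1, hx1, hy1.symm, hinlfB, hfBy, topSE, midSE, colSE, ?_, ?_⟩
  · -- (1) covariant transfers
    intro hcA hcC
    refine ⟨?_, ?_, hcov, hcA, ?_, hcC⟩
    · -- `CovExact 𝒲 x1 y1`
      apply covExact_of_ses 𝒲 topSE
      intro W hW v
      have h1 : ((v ≫ gC) ≫ t) ≫ y = 0 := by
        rw [assoc, ht, assoc, wC, comp_zero]
      obtain ⟨u1, hu1⟩ := (hcov W hW).2.1 ((v ≫ gC) ≫ t) h1
      obtain ⟨a, ha⟩ := (hcA W hW).2.2 u1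
      have ha : a ≫ fA = u1 := ha
      have hw : biprod.lift (-a) (v ≫ gC) ≫ fB = 0 := by
        rw [hfB, biprod.lift_desc, Preadditive.neg_comp, ← assoc, ha, hu1, neg_add_cancel]
      refine ⟨kernel.lift fB _ hw, ?_⟩
      show kernel.lift fB _ hw ≫ y1 = v
      rw [← cancel_mono gC, assoc, hy1, ← assoc]
      rw [hgB, kernel.lift_ι, biprod.lift_snd]
    · -- `CovExact` of the split middle row
      apply covExact_of_ses 𝒲 midSE
      intro W hW v
      exact ⟨biprod.lift 0 v, biprod.lift_snd _ _⟩
    · -- `CovExact 𝒲 gB fB`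
      apply covExact_of_ses 𝒲 colSE
      intro W hW v
      obtain ⟨s, hs⟩ := (hcC W hW).2.2 (v ≫ y)
      have hs : s ≫ fC = v ≫ y := hs
      have h1 : (v - s ≫ t) ≫ y = 0 := by
        rw [Preadditive.sub_comp, assoc, ht, hs, sub_self]
      obtain ⟨u1, hu1⟩ := (hcov W hW).2.1 _ h1
      obtain ⟨a, ha⟩ := (hcA W hW).2.2 u1
      have ha : a ≫ fA = u1 := ha
      refine ⟨biprod.lift a s, ?_⟩
      show biprod.lift a s ≫ fB = v
      rw [hfB, biprod.lift_desc, ← assoc, ha, hu1, sub_add_cancel]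
  · -- (2) contravariant transfers
    intro hct hcA' hcC'
    obtain ⟨w01x, topse⟩ := id topSE
    haveI := topse.epi_g
    have topCoker := topse.exact.gIsCokernel
    refine ⟨?_, ?_, hct, hcA', ?_, hcC'⟩
    · -- `ContraExact 𝒲 x1 y1`
      apply contraExact_of_ses 𝒲 topSE
      intro W hW v
      obtain ⟨p, hp⟩ := (hcA' W hW).2.2 v
      have hp : gA ≫ p = v := hp
      refine ⟨gB ≫ biprod.fst ≫ p, ?_⟩
      show x1 ≫ gB ≫ biprod.fst ≫ p = v
      rw [← assoc, hx1, assoc, biprod.inl_fst_assoc, hp]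
    · -- `ContraExact` of the split middle row
      apply contraExact_of_ses 𝒲 midSE
      intro W hW v
      exact ⟨biprod.desc v 0, biprod.inl_desc _ _⟩
    · -- `ContraExact 𝒲 gB fB`
      apply contraExact_of_ses 𝒲 colSE
      intro W hW v
      obtain ⟨p, hp⟩ := (hcA' W hW).2.2 (x1 ≫ v)
      have hp : gA ≫ p = x1 ≫ v := hp
      have h1 : x1 ≫ (v - gB ≫ biprod.fst ≫ p) = 0 := by
        rw [Preadditive.comp_sub, ← assoc, hx1, assoc, biprod.inl_fst_assoc, hp, sub_self]
      obtain ⟨q, hq⟩ := CokernelCofork.IsColimit.desc' topCoker _ h1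
      have hq : y1 ≫ q = v - gB ≫ biprod.fst ≫ p := hq
      obtain ⟨r, hr⟩ := (hcC' W hW).2.2 q
      have hr : gC ≫ r = q := hr
      refine ⟨biprod.desc p r, ?_⟩
      show gB ≫ biprod.desc p r = v
      have hd : (biprod.desc p r : W0A ⊞ W0C ⟶ W) =
          biprod.fst ≫ p + biprod.snd ≫ r := by
        apply biprod.hom_ext' <;> simp
      rw [hd, Preadditive.comp_add, ← assoc gB biprod.snd r, ← hy1, assoc, hr, hq]
      abel
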